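/- Let H be the complete 3-uniform hypergraph on a vertex set V of size n, with a colouring of its triples such that for every pair of vertices, at most k triples containing that pair have any given colour. Then there exists a subset S ⊆ V of size Ω_k(n^{1/5}) such that all triples inside S receive pairwise distinct colours. -/

import Mathlib

open scoped Classical
open Finset

noncomputable def rrBad {n : ℕ} {α : Type} (χ : Finset (Fin n) → α) :
    Finset (Finset (Fin n) × Finset (Fin n)) :=
  ((Finset.univ.powersetCard 3) ×ˢ (Finset.univ.powersetCard 3)).filter
    fun p => p.1 ≠ p.2 ∧ χ p.1 = χ p.2

lemma rr_fiber {n k : ℕ} {α : Type} (χ : Finset (Fin n) → α)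
    (hk : ∀ i j : Fin n, i ≠ j → ∀ a : α,
      ((Finset.univ.powersetCard 3).filter
        (fun t : Finset (Fin n) => i ∈ t ∧ j ∈ t ∧ χ t = a)).card ≤ k)
    (t1 : Finset (Fin n)) {i j : Fin n} (hij : i ≠ j) :
    ((rrBad χ).filter (fun p => p.1 = t1 ∧ i ∈ p.2 ∧ j ∈ p.2)).card ≤ k := by
  refine le_trans (Finset.card_le_card_of_injOn Prod.snd ?_ ?_) (hk i j hij (χ t1))
  · intro p hp
    simp only [rrBad, mem_coe, mem_filter, mem_product] at hp
    obtain ⟨⟨⟨h1, h2⟩, hne, hcol⟩, hpt, hi, hj⟩ := hp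
    exact mem_filter.2 ⟨h2, hi, hj, by rw [← hcol, hpt]⟩
  · intro p hp q hq h
    simp only [coe_filter, Set.mem_setOf_eq] at hp hq
    exact Prod.ext (hp.2.1.trans hq.2.1.symm) h

lemma rr_cover {n k : ℕ} {α : Type} (χ : Finset (Fin n) → α)
    (hk : ∀ i j : Fin n, i ≠ j → ∀ a : α,
      ((Finset.univ.powersetCard 3).filter
        (fun t : Finset (Fin n) => i ∈ t ∧ j ∈ t ∧ χ t = a)).card ≤ k)
    (I : Finset (Finset (Fin n) × Fin n × Fin n))
    (B : Finset (Finset (Fin n) × Finset (Fin n))) (hB : B ⊆ rrBad χ)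
    (hI : ∀ q ∈ I, q.2.1 ≠ q.2.2)
    (hcov : ∀ p ∈ B, ∃ q ∈ I, p.1 = q.1 ∧ q.2.1 ∈ p.2 ∧ q.2.2 ∈ p.2) :
    B.card ≤ I.card * k := by
  have hsub : B ⊆ I.biUnion (fun q => (rrBad χ).filter
      (fun p => p.1 = q.1 ∧ q.2.1 ∈ p.2 ∧ q.2.2 ∈ p.2)) := by
    intro p hp
    obtain ⟨q, hq, h⟩ := hcov p hp
    exact mem_biUnion.2 ⟨q, hq, mem_filter.2 ⟨hB hp, h⟩⟩
  calc B.card ≤ _ := card_le_card hsub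
    _ ≤ ∑ q ∈ I, ((rrBad χ).filter
        (fun p => p.1 = q.1 ∧ q.2.1 ∈ p.2 ∧ q.2.2 ∈ p.2)).card := card_biUnion_le
    _ ≤ ∑ _q ∈ I, k := sum_le_sum fun q hq => rr_fiber χ hk q.1 (hI q hq)
    _ = I.card * k := by rw [sum_const, smul_eq_mul]

lemma rr_mem {n : ℕ} {α : Type} {χ : Finset (Fin n) → α}
    {p : Finset (Fin n) × Finset (Fin n)} (hp : p ∈ rrBad χ) :
    p.1 ∈ Finset.univ.powersetCard 3 ∧ p.2 ∈ Finset.univ.powersetCard 3 ∧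
      p.1.card = 3 ∧ p.2.card = 3 ∧ p.1 ≠ p.2 ∧ χ p.1 = χ p.2 := by
  simp only [rrBad, mem_filter, mem_product] at hp
  obtain ⟨⟨h1, h2⟩, hne, hcol⟩ := hp
  exact ⟨h1, h2, (mem_powersetCard.1 h1).2, (mem_powersetCard.1 h2).2, hne, hcol⟩

lemma rr_T_card {n : ℕ} : ((Finset.univ : Finset (Fin n)).powersetCard 3).card ≤ n ^ 3 := by
  rw [card_powersetCard, card_univ, Fintype.card_fin]
  exact Nat.choose_le_pow n 3

lemma rr_supersets {n m : ℕ} (A : Finset (Fin n)) :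
    (((Finset.univ : Finset (Fin n)).powersetCard m).filter (fun S => A ⊆ S)).card
      ≤ (n - A.card).choose (m - A.card) := by
  have h : (((Finset.univ : Finset (Fin n)).powersetCard m).filter (fun S => A ⊆ S)).card
      ≤ (((Finset.univ : Finset (Fin n)) \ A).powersetCard (m - A.card)).card := by
    apply Finset.card_le_card_of_injOn (fun S => S \ A)
    · intro S hS
      simp only [mem_coe, mem_filter, mem_powersetCard] at hS
      obtain ⟨⟨hSu, hScard⟩, hAS⟩ := hS
      rw [mem_coe, mem_powersetCard]
      exact ⟨sdiff_subset_sdiff hSu (le_refl _), by rw [card_sdiff_of_subset hAS, hScard]⟩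
    · intro S hS S' hS' hEq
      simp only [coe_filter, Set.mem_setOf_eq] at hS hS'
      simp only at hEq
      rw [← sdiff_union_of_subset hS.2, ← sdiff_union_of_subset hS'.2, hEq]
  rwa [card_powersetCard, card_sdiff_of_subset (subset_univ A), card_univ, Fintype.card_fin] at h

lemma rr_ratio {n m u : ℕ} (hum : u ≤ m) (hmn : m ≤ n) (hu : u ≤ 6) :
    (n - u).choose (m - u) * (n - 5) ^ u ≤ n.choose m * m ^ u := by
  have key : (n - u).choose (m - u) * Nat.descFactorial n u
      = n.choose m * Nat.descFactorial m u := by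
    rw [Nat.descFactorial_eq_factorial_mul_choose, Nat.descFactorial_eq_factorial_mul_choose]
    have h2 := Nat.choose_mul (n := n) hum
    calc (n - u).choose (m - u) * (Nat.factorial u * n.choose u)
        = Nat.factorial u * (n.choose u * (n - u).choose (m - u)) := by ring
      _ = Nat.factorial u * (n.choose m * m.choose u) := by rw [← h2]
      _ = n.choose m * (Nat.factorial u * m.choose u) := by ring
  calc (n - u).choose (m - u) * (n - 5) ^ u
      ≤ (n - u).choose (m - u) * (n + 1 - u) ^ u := by
        apply Nat.mul_le_mul_left
        apply Nat.pow_le_pow_left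
        omega
    _ ≤ (n - u).choose (m - u) * Nat.descFactorial n u :=
        Nat.mul_le_mul_left _ (Nat.pow_sub_le_descFactorial n u)
    _ = n.choose m * Nat.descFactorial m u := key
    _ ≤ n.choose m * m ^ u := Nat.mul_le_mul_left _ (Nat.descFactorial_le_pow m u)

variable {n k : ℕ} {α : Type}
lemma rr_count2 (χ : Finset (Fin n) → α)
    (hk : ∀ i j : Fin n, i ≠ j → ∀ a : α,
      ((Finset.univ.powersetCard 3).filter
        (fun t : Finset (Fin n) => i ∈ t ∧ j ∈ t ∧ χ t = a)).card ≤ k) :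
    ((rrBad χ).filter fun p => (p.1 ∩ p.2).card = 2).card ≤ 9 * n ^ 3 * k := by
  set T := (Finset.univ : Finset (Fin n)).powersetCard 3 with hT
  set I := (T.biUnion fun t => ({t} ×ˢ t ×ˢ t)).filter (fun q => q.2.1 ≠ q.2.2) with hI
  have hIcard : I.card ≤ 9 * n ^ 3 := by
    calc I.card ≤ (T.biUnion fun t => ({t} ×ˢ t ×ˢ t)).card := card_filter_le _ _
      _ ≤ ∑ t ∈ T, ({t} ×ˢ t ×ˢ t).card := card_biUnion_le
      _ ≤ ∑ _t ∈ T, 9 := by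
          refine sum_le_sum fun t ht => ?_
          rw [card_product, card_product, card_singleton,
            (mem_powersetCard.1 ht).2, one_mul]
      _ = T.card * 9 := by rw [sum_const, smul_eq_mul]
      _ ≤ n ^ 3 * 9 := Nat.mul_le_mul_right _ rr_T_card
      _ = 9 * n ^ 3 := by ring
  refine le_trans (rr_cover χ hk I _ (filter_subset _ _) ?_ ?_)
    (Nat.mul_le_mul_right _ hIcard)
  · intro q hq; exact (mem_filter.1 hq).2
  · intro p hp
    obtain ⟨hpB, hcard⟩ := mem_filter.1 hp
    obtain ⟨hT1, hT2, hc1, hc2, hne, hcol⟩ := rr_mem hpB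
    obtain ⟨a, b, hab, hins⟩ := card_eq_two.1 hcard
    have ha : a ∈ p.1 ∩ p.2 := by rw [hins]; exact mem_insert_self _ _
    have hb : b ∈ p.1 ∩ p.2 := by rw [hins]; exact mem_insert_of_mem (mem_singleton_self _)
    refine ⟨(p.1, a, b), ?_, rfl, (mem_inter.1 ha).2, (mem_inter.1 hb).2⟩
    rw [hI, mem_filter]
    refine ⟨mem_biUnion.2 ⟨p.1, hT1, ?_⟩, hab⟩
    exact mem_product.2 ⟨mem_singleton_self _,
      mem_product.2 ⟨(mem_inter.1 ha).1, (mem_inter.1 hb).1⟩⟩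

lemma rr_count1 (χ : Finset (Fin n) → α)
    (hk : ∀ i j : Fin n, i ≠ j → ∀ a : α,
      ((Finset.univ.powersetCard 3).filter
        (fun t : Finset (Fin n) => i ∈ t ∧ j ∈ t ∧ χ t = a)).card ≤ k) :
    ((rrBad χ).filter fun p => (p.1 ∩ p.2).card = 1).card ≤ 3 * n ^ 4 * k := by
  set T := (Finset.univ : Finset (Fin n)).powersetCard 3 with hT
  set I := (T.biUnion fun t => ({t} ×ˢ t ×ˢ (Finset.univ : Finset (Fin n)))).filter
    (fun q => q.2.1 ≠ q.2.2) with hI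
  have hIcard : I.card ≤ 3 * n ^ 4 := by
    calc I.card ≤ (T.biUnion fun t => ({t} ×ˢ t ×ˢ Finset.univ)).card := card_filter_le _ _
      _ ≤ ∑ t ∈ T, ({t} ×ˢ t ×ˢ (Finset.univ : Finset (Fin n))).card := card_biUnion_le
      _ ≤ ∑ _t ∈ T, 3 * n := by
          refine sum_le_sum fun t ht => ?_
          rw [card_product, card_product, card_singleton,
            (mem_powersetCard.1 ht).2, one_mul, card_univ, Fintype.card_fin]
      _ = T.card * (3 * n) := by rw [sum_const, smul_eq_mul]
      _ ≤ n ^ 3 * (3 * n) := Nat.mul_le_mul_right _ rr_T_card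
      _ = 3 * n ^ 4 := by ring
  refine le_trans (rr_cover χ hk I _ (filter_subset _ _) ?_ ?_)
    (Nat.mul_le_mul_right _ hIcard)
  · intro q hq; exact (mem_filter.1 hq).2
  · intro p hp
    obtain ⟨hpB, hcard⟩ := mem_filter.1 hp
    obtain ⟨hT1, hT2, hc1, hc2, hne, hcol⟩ := rr_mem hpB
    obtain ⟨a, hins⟩ := card_eq_one.1 hcard
    have ha : a ∈ p.1 ∩ p.2 := by rw [hins]; exact mem_singleton_self _
    have hsd : (p.2 \ p.1).Nonempty := by
      rw [← card_pos]
      have h1 := card_inter_add_card_sdiff p.2 p.1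
      rw [inter_comm] at h1
      omega
    obtain ⟨b, hb⟩ := hsd
    have hb2 : b ∈ p.2 := (mem_sdiff.1 hb).1
    have hb1 : b ∉ p.1 := (mem_sdiff.1 hb).2
    have hab : a ≠ b := fun h => hb1 (h ▸ (mem_inter.1 ha).1)
    refine ⟨(p.1, a, b), ?_, rfl, (mem_inter.1 ha).2, hb2⟩
    rw [hI, mem_filter]
    refine ⟨mem_biUnion.2 ⟨p.1, hT1, ?_⟩, hab⟩
    exact mem_product.2 ⟨mem_singleton_self _,
      mem_product.2 ⟨(mem_inter.1 ha).1, mem_univ _⟩⟩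

lemma rr_count0 (χ : Finset (Fin n) → α)
    (hk : ∀ i j : Fin n, i ≠ j → ∀ a : α,
      ((Finset.univ.powersetCard 3).filter
        (fun t : Finset (Fin n) => i ∈ t ∧ j ∈ t ∧ χ t = a)).card ≤ k) :
    (rrBad χ).card ≤ n ^ 5 * k := by
  set T := (Finset.univ : Finset (Fin n)).powersetCard 3 with hT
  set I := (T ×ˢ ((Finset.univ : Finset (Fin n)) ×ˢ (Finset.univ : Finset (Fin n)))).filter
    (fun q => q.2.1 ≠ q.2.2) with hI
  have hIcard : I.card ≤ n ^ 5 := by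
    calc I.card ≤ (T ×ˢ ((Finset.univ : Finset (Fin n)) ×ˢ Finset.univ)).card :=
          card_filter_le _ _
      _ = T.card * (n * n) := by
          rw [card_product, card_product, card_univ, Fintype.card_fin]
      _ ≤ n ^ 3 * (n * n) := Nat.mul_le_mul_right _ rr_T_card
      _ = n ^ 5 := by ring
  refine le_trans (rr_cover χ hk I _ (le_refl _) ?_ ?_) (Nat.mul_le_mul_right _ hIcard)
  · intro q hq; exact (mem_filter.1 hq).2
  · intro p hp
    obtain ⟨hT1, hT2, hc1, hc2, hne, hcol⟩ := rr_mem hp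
    obtain ⟨a, b, c, hab, hac, hbc, hins⟩ := card_eq_three.1 hc2
    have ha : a ∈ p.2 := by rw [hins]; exact mem_insert_self _ _
    have hb : b ∈ p.2 := by rw [hins]; exact mem_insert_of_mem (mem_insert_self _ _)
    refine ⟨(p.1, a, b), ?_, rfl, ha, hb⟩
    rw [hI, mem_filter]
    exact ⟨mem_product.2 ⟨hT1, mem_product.2 ⟨mem_univ _, mem_univ _⟩⟩, hab⟩

lemma rr_avg (χ : Finset (Fin n) → α)
    (hk : ∀ i j : Fin n, i ≠ j → ∀ a : α,
      ((Finset.univ.powersetCard 3).filter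
        (fun t : Finset (Fin n) => i ∈ t ∧ j ∈ t ∧ χ t = a)).card ≤ k)
    {m : ℕ} (hm6 : 6 ≤ m) (hmn : m ≤ n) :
    ∃ S ∈ (Finset.univ : Finset (Fin n)).powersetCard m,
      ((rrBad χ).filter (fun p => p.1 ∪ p.2 ⊆ S)).card * (n - 5) ^ 6
        ≤ 13 * k * n ^ 5 * m ^ 6 := by
  classical
  set P := (Finset.univ : Finset (Fin n)).powersetCard m with hP
  have hPcard : P.card = n.choose m := by
    rw [hP, card_powersetCard, card_univ, Fintype.card_fin]
  have hPne : P.Nonempty := by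
    rw [hP]
    exact powersetCard_nonempty.2 (by rw [card_univ, Fintype.card_fin]; exact hmn)
  obtain ⟨S₀, hS₀P, hmin⟩ := exists_min_image P
    (fun S => ((rrBad χ).filter (fun p => p.1 ∪ p.2 ⊆ S)).card) hPne
  refine ⟨S₀, hS₀P, ?_⟩
  set badc := ((rrBad χ).filter (fun p => p.1 ∪ p.2 ⊆ S₀)).card with hbadc
  have hufact : ∀ p ∈ rrBad χ, (p.1 ∪ p.2).card + (p.1 ∩ p.2).card = 6 := by
    intro p hp
    obtain ⟨_, _, hc1, hc2, _, _⟩ := rr_mem hp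
    rw [card_union_add_card_inter, hc1, hc2]
  have hsle : ∀ p ∈ rrBad χ, (p.1 ∩ p.2).card ≤ 2 := by
    intro p hp
    obtain ⟨_, _, hc1, hc2, hne, _⟩ := rr_mem hp
    by_contra h
    push_neg at h
    have hsub : p.1 ∩ p.2 ⊆ p.1 := inter_subset_left
    have h3 : p.1 ∩ p.2 = p.1 := eq_of_subset_of_card_le hsub (by omega)
    have hss : p.1 ⊆ p.2 := by rw [← h3]; exact inter_subset_right
    exact hne (eq_of_subset_of_card_le hss (by omega))
  -- the weight function
  set W : Finset (Fin n) × Finset (Fin n) → ℕ :=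
    fun p => (n - (p.1 ∪ p.2).card).choose (m - (p.1 ∪ p.2).card) with hW
  -- averaging
  have hswap : ∑ S ∈ P, ((rrBad χ).filter (fun p => p.1 ∪ p.2 ⊆ S)).card
      = ∑ p ∈ rrBad χ, (P.filter (fun S => p.1 ∪ p.2 ⊆ S)).card := by
    simp_rw [card_filter]
    exact Finset.sum_comm
  have havg : n.choose m * badc ≤ ∑ p ∈ rrBad χ, W p := by
    calc n.choose m * badc = ∑ _S ∈ P, badc := by rw [sum_const, smul_eq_mul, hPcard]
      _ ≤ ∑ S ∈ P, ((rrBad χ).filter (fun p => p.1 ∪ p.2 ⊆ S)).card :=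
          sum_le_sum fun S hS => hmin S hS
      _ = ∑ p ∈ rrBad χ, (P.filter (fun S => p.1 ∪ p.2 ⊆ S)).card := hswap
      _ ≤ ∑ p ∈ rrBad χ, W p := sum_le_sum fun p _ => by
          simpa using rr_supersets (n := n) (m := m) (p.1 ∪ p.2)
  -- splitting the weighted sum
  have hsplit : ∑ p ∈ rrBad χ, W p
      ≤ ((rrBad χ).filter fun p => (p.1 ∩ p.2).card = 2).card * (n - 4).choose (m - 4)
        + ((rrBad χ).filter fun p => (p.1 ∩ p.2).card = 1).card * (n - 5).choose (m - 5)
        + (rrBad χ).card * (n - 6).choose (m - 6) := by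
    rw [← sum_filter_add_sum_filter_not (rrBad χ) (fun p => (p.1 ∩ p.2).card = 2),
      ← sum_filter_add_sum_filter_not ((rrBad χ).filter fun p => ¬(p.1 ∩ p.2).card = 2)
        (fun p => (p.1 ∩ p.2).card = 1)]
    have b2 : ∑ p ∈ (rrBad χ).filter (fun p => (p.1 ∩ p.2).card = 2), W p
        ≤ ((rrBad χ).filter fun p => (p.1 ∩ p.2).card = 2).card * (n - 4).choose (m - 4) := by
      refine le_trans (sum_le_card_nsmul _ _ ((n - 4).choose (m - 4)) ?_) (le_of_eq (smul_eq_mul _ _))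
      intro p hp
      obtain ⟨hpB, hs⟩ := mem_filter.1 hp
      have h6 := hufact p hpB
      have hu : (p.1 ∪ p.2).card = 4 := by omega
      simp only [hW, hu, le_refl]
    have b1 : ∑ p ∈ ((rrBad χ).filter fun p => ¬(p.1 ∩ p.2).card = 2).filter
          (fun p => (p.1 ∩ p.2).card = 1), W p
        ≤ ((rrBad χ).filter fun p => (p.1 ∩ p.2).card = 1).card * (n - 5).choose (m - 5) := by
      refine le_trans (sum_le_card_nsmul _ _ ((n - 5).choose (m - 5)) ?_) ?_
      · intro p hp
        obtain ⟨hp', hs⟩ := mem_filter.1 hp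
        have hpB : p ∈ rrBad χ := filter_subset _ _ hp'
        have h6 := hufact p hpB
        have hu : (p.1 ∪ p.2).card = 5 := by omega
        simp only [hW, hu, le_refl]
      · rw [smul_eq_mul]
        refine Nat.mul_le_mul_right _ (card_le_card ?_)
        intro p hp
        obtain ⟨hp', hs⟩ := mem_filter.1 hp
        exact mem_filter.2 ⟨filter_subset _ _ hp', hs⟩
    have b0 : ∑ p ∈ ((rrBad χ).filter fun p => ¬(p.1 ∩ p.2).card = 2).filter
          (fun p => ¬(p.1 ∩ p.2).card = 1), W p
        ≤ (rrBad χ).card * (n - 6).choose (m - 6) := by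
      refine le_trans (sum_le_card_nsmul _ _ ((n - 6).choose (m - 6)) ?_) ?_
      · intro p hp
        obtain ⟨hp', hs1⟩ := mem_filter.1 hp
        obtain ⟨hpB, hs2⟩ := mem_filter.1 hp'
        have h6 := hufact p hpB
        have hle := hsle p hpB
        have hu : (p.1 ∪ p.2).card = 6 := by omega
        simp only [hW, hu, le_refl]
      · rw [smul_eq_mul]
        exact Nat.mul_le_mul_right _ (le_trans (card_filter_le _ _) (card_filter_le _ _))
    omega
  -- counting bounds
  have hc2 := rr_count2 χ hk
  have hc1 := rr_count1 χ hk
  have hc0 := rr_count0 χ hk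
  have hr4 := rr_ratio (le_trans (by norm_num) hm6) hmn (by norm_num : (4:ℕ) ≤ 6)
  have hr5 := rr_ratio (le_trans (by norm_num) hm6) hmn (by norm_num : (5:ℕ) ≤ 6)
  have hr6 := rr_ratio hm6 hmn (le_refl 6)
  have hm1 : 1 ≤ m := le_trans (by norm_num) hm6
  have hnsub : n - 5 ≤ n := Nat.sub_le _ _
  have key : n.choose m * (badc * (n - 5) ^ 6)
      ≤ n.choose m * (13 * k * n ^ 5 * m ^ 6) := by
    calc n.choose m * (badc * (n - 5) ^ 6)
        = (n.choose m * badc) * (n - 5) ^ 6 := by ring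
      _ ≤ (∑ p ∈ rrBad χ, W p) * (n - 5) ^ 6 := Nat.mul_le_mul_right _ havg
      _ ≤ (((rrBad χ).filter fun p => (p.1 ∩ p.2).card = 2).card * (n - 4).choose (m - 4)
            + ((rrBad χ).filter fun p => (p.1 ∩ p.2).card = 1).card * (n - 5).choose (m - 5)
            + (rrBad χ).card * (n - 6).choose (m - 6)) * (n - 5) ^ 6 :=
          Nat.mul_le_mul_right _ hsplit
      _ ≤ ((9 * n ^ 3 * k) * (n - 4).choose (m - 4)
            + (3 * n ^ 4 * k) * (n - 5).choose (m - 5)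
            + (n ^ 5 * k) * (n - 6).choose (m - 6)) * (n - 5) ^ 6 := by
          refine Nat.mul_le_mul_right _ ?_
          refine Nat.add_le_add (Nat.add_le_add ?_ ?_) ?_
          · exact Nat.mul_le_mul_right _ hc2
          · exact Nat.mul_le_mul_right _ hc1
          · exact Nat.mul_le_mul_right _ hc0
      _ = 9 * n ^ 3 * k * (((n - 4).choose (m - 4) * (n - 5) ^ 4) * (n - 5) ^ 2)
            + 3 * n ^ 4 * k * (((n - 5).choose (m - 5) * (n - 5) ^ 5) * (n - 5) ^ 1)
            + n ^ 5 * k * ((n - 6).choose (m - 6) * (n - 5) ^ 6) := by ring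
      _ ≤ 9 * n ^ 3 * k * ((n.choose m * m ^ 4) * n ^ 2)
            + 3 * n ^ 4 * k * ((n.choose m * m ^ 5) * n ^ 1)
            + n ^ 5 * k * (n.choose m * m ^ 6) := by
          refine Nat.add_le_add (Nat.add_le_add ?_ ?_) ?_
          · exact Nat.mul_le_mul_left _ (Nat.mul_le_mul hr4 (Nat.pow_le_pow_left hnsub 2))
          · exact Nat.mul_le_mul_left _ (Nat.mul_le_mul hr5 (Nat.pow_le_pow_left hnsub 1))
          · exact Nat.mul_le_mul_left _ hr6
      _ = n.choose m * (k * n ^ 5 * (9 * m ^ 4 + 3 * m ^ 5 + m ^ 6)) := by ring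
      _ ≤ n.choose m * (k * n ^ 5 * (13 * m ^ 6)) := by
          refine Nat.mul_le_mul_left _ (Nat.mul_le_mul_left _ ?_)
          have e1 : m ^ 4 ≤ m ^ 6 := Nat.pow_le_pow_right hm1 (by norm_num)
          have e2 : m ^ 5 ≤ m ^ 6 := Nat.pow_le_pow_right hm1 (by norm_num)
          omega
      _ = n.choose m * (13 * k * n ^ 5 * m ^ 6) := by ring
  exact Nat.le_of_mul_le_mul_left key (Nat.choose_pos hmn)

/-- Rainbow Ramsey theorem for 3-uniform hypergraphs: for every `k` there is a
constant `C > 0` such that the following holds for every `n`.  If the triples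
of an `n`-element vertex set are coloured so that for every pair of distinct
vertices at most `k` triples containing that pair receive any given colour,
then there is a set `S` of at least `C·n^{1/5}` vertices such that all triples
inside `S` receive pairwise distinct colours. -/
theorem stmt14 (k : ℕ) :
    ∃ C : ℝ, 0 < C ∧
      ∀ (n : ℕ) (α : Type) (χ : Finset (Fin n) → α),
        (∀ i j : Fin n, i ≠ j → ∀ a : α,
          ((Finset.univ.powersetCard 3).filter
            (fun t : Finset (Fin n) => i ∈ t ∧ j ∈ t ∧ χ t = a)).card ≤ k) →
        ∃ S : Finset (Fin n), C * (n : ℝ) ^ ((1 : ℝ) / 5) ≤ S.card ∧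
          ∀ t₁ ∈ S.powersetCard 3, ∀ t₂ ∈ S.powersetCard 3,
            χ t₁ = χ t₂ → t₁ = t₂ := by
  classical
  set K : ℕ := 4992 * (k + 1) with hK
  have hKpos : 0 < K := by positivity
  have hKR : (0:ℝ) < (K:ℝ) := by exact_mod_cast hKpos
  have hKrpow : (0:ℝ) < (K:ℝ) ^ ((1:ℝ)/5) := Real.rpow_pos_of_pos hKR _
  refine ⟨1 / (32 * (K:ℝ) ^ ((1:ℝ)/5)), by positivity, ?_⟩
  intro n α χ hk
  -- vacuous rainbow for small sets
  have vac : ∀ S : Finset (Fin n), S.card ≤ 2 →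
      ∀ t₁ ∈ S.powersetCard 3, ∀ t₂ ∈ S.powersetCard 3, χ t₁ = χ t₂ → t₁ = t₂ := by
    intro S hS t₁ ht₁
    obtain ⟨hsub, hcard⟩ := Finset.mem_powersetCard.1 ht₁
    have := Finset.card_le_card hsub
    omega
  set x : ℝ := ((n:ℝ) / (K:ℝ)) ^ ((1:ℝ)/5) with hx
  have hnK : (0:ℝ) ≤ (n:ℝ) / (K:ℝ) := by positivity
  have hxnn : 0 ≤ x := Real.rpow_nonneg hnK _
  have hCx : 1 / (32 * (K:ℝ) ^ ((1:ℝ)/5)) * (n : ℝ) ^ ((1:ℝ)/5) = x / 32 := by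
    rw [hx, Real.div_rpow (by positivity) (le_of_lt hKR)]
    field_simp
  rw [hCx]
  have h32 : ((32:ℝ) ^ (5:ℕ)) ^ ((1:ℝ)/5) = 32 := by
    rw [← Real.rpow_natCast (32:ℝ) 5, ← Real.rpow_mul (by norm_num)]
    norm_num
  by_cases hbig : (32:ℝ) ^ (5:ℕ) * (K:ℝ) ≤ (n:ℝ)
  · -- main branch
    have hx32 : (32:ℝ) ≤ x := by
      rw [← h32, hx]
      apply Real.rpow_le_rpow (by positivity) _ (by norm_num)
      rw [le_div_iff₀ hKR]
      linarith
    set m : ℕ := ⌊x⌋₊ with hm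
    have hmx : (m:ℝ) ≤ x := Nat.floor_le hxnn
    have hxm1 : x < (m:ℝ) + 1 := Nat.lt_floor_add_one x
    have hm32 : 32 ≤ m := Nat.le_floor (by exact_mod_cast hx32)
    have hxpow : x ^ (5:ℕ) = (n:ℝ) / (K:ℝ) := by
      rw [hx, ← Real.rpow_natCast (((n:ℝ)/(K:ℝ)) ^ ((1:ℝ)/5)) 5,
        ← Real.rpow_mul hnK]
      norm_num
    have hKm5 : K * m ^ 5 ≤ n := by
      have hr : (K:ℝ) * (m:ℝ) ^ (5:ℕ) ≤ (n:ℝ) := by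
        have h1 : (m:ℝ) ^ (5:ℕ) ≤ x ^ (5:ℕ) := by
          apply pow_le_pow_left₀ (by positivity) hmx
        rw [hxpow] at h1
        calc (K:ℝ) * (m:ℝ) ^ (5:ℕ) ≤ (K:ℝ) * ((n:ℝ)/(K:ℝ)) := by
              exact mul_le_mul_of_nonneg_left h1 (le_of_lt hKR)
          _ = (n:ℝ) := by field_simp
      exact_mod_cast hr
    have hm6 : 6 ≤ m := by omega
    have hmn : m ≤ n := by
      have h1 : m ≤ m ^ 5 := Nat.le_self_pow (by norm_num) m
      have h2 : m ^ 5 ≤ K * m ^ 5 := Nat.le_mul_of_pos_left _ hKpos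
      omega
    have hn10 : 10 ≤ n := by
      have h1 : K ≤ K * m ^ 5 := Nat.le_mul_of_pos_right _ (by positivity)
      omega
    obtain ⟨S₀, hS₀, hbound⟩ := rr_avg χ hk hm6 hmn
    set F := (rrBad χ).filter (fun p => p.1 ∪ p.2 ⊆ S₀) with hF
    set badc := F.card with hbadc
    -- 6 * badc ≤ m
    have hbn : badc * n ≤ 832 * k * m ^ 6 := by
      have h1 : n ≤ 2 * (n - 5) := by omega
      have h2 : n ^ 6 ≤ 64 * (n - 5) ^ 6 := by
        calc n ^ 6 ≤ (2 * (n - 5)) ^ 6 := Nat.pow_le_pow_left h1 6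
          _ = 64 * (n - 5) ^ 6 := by ring
      have h3 : (badc * n) * n ^ 5 ≤ (832 * k * m ^ 6) * n ^ 5 := by
        calc (badc * n) * n ^ 5 = badc * n ^ 6 := by ring
          _ ≤ badc * (64 * (n - 5) ^ 6) := Nat.mul_le_mul_left _ h2
          _ = 64 * (badc * (n - 5) ^ 6) := by ring
          _ ≤ 64 * (13 * k * n ^ 5 * m ^ 6) := Nat.mul_le_mul_left _ hbound
          _ = (832 * k * m ^ 6) * n ^ 5 := by ring
      exact Nat.le_of_mul_le_mul_right h3 (by positivity)
    have h6b : 6 * badc ≤ m := by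
      have h4 : (badc * K) * m ^ 5 ≤ (832 * k * m) * m ^ 5 := by
        calc (badc * K) * m ^ 5 = badc * (K * m ^ 5) := by ring
          _ ≤ badc * n := Nat.mul_le_mul_left _ hKm5
          _ ≤ 832 * k * m ^ 6 := hbn
          _ = (832 * k * m) * m ^ 5 := by ring
      have h5 : badc * K ≤ 832 * k * m := Nat.le_of_mul_le_mul_right h4 (by positivity)
      have h6 : (832 * (k + 1)) * (6 * badc) ≤ (832 * (k + 1)) * m := by
        calc (832 * (k + 1)) * (6 * badc) = badc * (4992 * (k + 1)) := by ring
          _ = badc * K := by rw [hK]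
          _ ≤ 832 * k * m := h5
          _ ≤ (832 * (k + 1)) * m := by
              exact Nat.mul_le_mul_right _ (by omega)
      exact Nat.le_of_mul_le_mul_left h6 (by positivity)
    -- deletion
    set D := F.biUnion (fun p => p.1) with hD
    have hDcard : D.card ≤ 3 * badc := by
      calc D.card ≤ ∑ p ∈ F, p.1.card := card_biUnion_le
        _ ≤ F.card * 3 := by
            refine le_trans (sum_le_card_nsmul _ _ 3 ?_) (le_of_eq (smul_eq_mul _ _))
            intro p hp
            exact le_of_eq (rr_mem (filter_subset _ _ hp)).2.2.1
        _ = 3 * badc := by rw [hbadc]; ring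
    refine ⟨S₀ \ D, ?_, ?_⟩
    · -- size bound
      have hS₀card : S₀.card = m := (Finset.mem_powersetCard.1 hS₀).2
      have hsize : m ≤ 2 * (S₀ \ D).card := by
        have h1 : S₀.card ≤ (S₀ \ D).card + D.card := card_le_card_sdiff_add_card
        omega
      have hsizeR : (m:ℝ) ≤ 2 * ((S₀ \ D).card : ℝ) := by exact_mod_cast hsize
      have hm1R : (1:ℝ) ≤ (m:ℝ) := by exact_mod_cast (by omega : 1 ≤ m)
      have hcnn : (0:ℝ) ≤ ((S₀ \ D).card : ℝ) := by positivity
      linarith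
    · -- rainbow
      intro t₁ ht₁ t₂ ht₂ hcol
      by_contra hne
      obtain ⟨hsub1, hcard1⟩ := Finset.mem_powersetCard.1 ht₁
      obtain ⟨hsub2, hcard2⟩ := Finset.mem_powersetCard.1 ht₂
      have hpB : (t₁, t₂) ∈ rrBad χ := by
        rw [rrBad, mem_filter, mem_product]
        exact ⟨⟨Finset.mem_powersetCard.2 ⟨subset_univ _, hcard1⟩,
          Finset.mem_powersetCard.2 ⟨subset_univ _, hcard2⟩⟩, hne, hcol⟩
      have hpF : (t₁, t₂) ∈ F := by
        rw [hF, mem_filter]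
        refine ⟨hpB, ?_⟩
        exact union_subset (hsub1.trans sdiff_subset) (hsub2.trans sdiff_subset)
      have ht1D : t₁ ⊆ D := by
        rw [hD]
        intro y hy
        exact mem_biUnion.2 ⟨(t₁, t₂), hpF, hy⟩
      have hne1 : t₁.Nonempty := by rw [← card_pos, hcard1]; norm_num
      obtain ⟨y, hy⟩ := hne1
      have hyS' : y ∈ S₀ \ D := hsub1 hy
      exact (mem_sdiff.1 hyS').2 (ht1D hy)
  · -- small branch
    push_neg at hbig
    have hxlt : x < 32 := by
      rw [← h32, hx]
      apply Real.rpow_lt_rpow hnK _ (by norm_num)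
      rw [div_lt_iff₀ hKR]
      linarith
    rcases Nat.eq_zero_or_pos n with hn0 | hnpos
    · subst hn0
      refine ⟨∅, ?_, vac ∅ (by simp)⟩
      have hx0 : x = 0 := by
        rw [hx, Nat.cast_zero, zero_div, Real.zero_rpow (by norm_num : (1:ℝ)/5 ≠ 0)]
      rw [hx0]
      simp
    · obtain ⟨i⟩ : Nonempty (Fin n) := ⟨⟨0, hnpos⟩⟩
      refine ⟨{i}, ?_, vac {i} (by simp)⟩
      rw [Finset.card_singleton]
      push_cast
      linarith
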